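/- arXiv:1710.01047 — 2 statements merged into one kernel-verified Lean document; each statement's English description precedes it below -/
import Mathlib

section
/- For every non-negative integer t and any power of a formal variable, the coefficient of z^{2t} in the formal power series S(z)^{ν-1}, viewed as a function of the integer parameter ν, is given by a polynomial in ν of degree t. That is, there exists a polynomial P_t ∈ ℚ[x] with deg P_t = t such that [z^{2t}] S(z)^{ν-1} = P_t(ν) for all positive integers ν. -/
open Nat

/-- The formal power series `S(z) = 2 sinh(z/2)/z = ∑_{m≥0} z^{2m}/(2^{2m}(2m+1)!)
  = 1 + z²/24 + z⁴/1920 + ⋯`. -/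
noncomputable def Spow : PowerSeries ℚ :=
  PowerSeries.mk fun n => if Even n then (1 : ℚ) / (2 ^ n * (n + 1)!) else 0

noncomputable def Upow : PowerSeries ℚ :=
  PowerSeries.mk fun n => if Even n then (1 : ℚ) / (2 ^ (n + 2) * (n + 3)!) else 0

lemma Spow_eq : Spow = 1 + PowerSeries.X ^ 2 * Upow := by
  ext n
  rw [map_add, PowerSeries.coeff_X_pow_mul' Upow 2 n]
  match n with
  | 0 => simp [Spow]
  | 1 => simp [Spow, Upow]
  | (d+2) =>
    have h1 : PowerSeries.coeff (d+2) (1 : PowerSeries ℚ) = 0 := by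
      simp [PowerSeries.coeff_one]
    rw [h1, zero_add, if_pos (by omega)]
    have : d + 2 - 2 = d := by omega
    rw [this]
    simp only [Spow, Upow, PowerSeries.coeff_mk, Nat.even_add_one, Nat.even_add]
    norm_num

lemma constCoeff_Upow : PowerSeries.constantCoeff Upow = 1 / 24 := by
  rw [← PowerSeries.coeff_zero_eq_constantCoeff_apply]
  simp [Upow]
  norm_num [Nat.factorial]

/-- Coefficient of z^(2t) in (S-1)^k. -/
noncomputable def ck (t k : ℕ) : ℚ :=
  PowerSeries.coeff (2 * t) ((PowerSeries.X ^ 2 * Upow) ^ k)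

lemma ck_eq_zero {t k : ℕ} (h : t < k) : ck t k = 0 := by
  unfold ck
  rw [mul_pow, ← pow_mul, PowerSeries.coeff_X_pow_mul', if_neg (by omega)]

lemma ck_top (t : ℕ) : ck t t = (1 / 24 : ℚ) ^ t := by
  unfold ck
  rw [mul_pow, ← pow_mul, PowerSeries.coeff_X_pow_mul', if_pos le_rfl, Nat.sub_self,
    PowerSeries.coeff_zero_eq_constantCoeff_apply, map_pow, constCoeff_Upow]

lemma coeff_Spow_pow (t n : ℕ) :
    PowerSeries.coeff (2 * t) (Spow ^ n) =
      ∑ k ∈ Finset.range (t + 1), ck t k * (n.choose k : ℚ) := by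
  rw [Spow_eq, add_comm, add_pow]
  rw [map_sum]
  have key : ∀ m, PowerSeries.coeff (2 * t) (Spow ^ n) =
      ∑ k ∈ Finset.range m, ck t k * (n.choose k : ℚ) → True := fun _ _ => trivial
  have e1 : ∀ k ∈ Finset.range (n + 1),
      PowerSeries.coeff (2 * t)
        ((PowerSeries.X ^ 2 * Upow) ^ k * 1 ^ (n - k) * (n.choose k : PowerSeries ℚ)) =
      ck t k * (n.choose k : ℚ) := by
    intro k _
    rw [one_pow, mul_one, ← map_natCast PowerSeries.C (n.choose k),
      PowerSeries.coeff_mul_C]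
    rfl
  rw [Finset.sum_congr rfl e1]
  -- both sums equal sum over range (n + t + 2)
  rw [show (∑ k ∈ Finset.range (n + 1), ck t k * (n.choose k : ℚ)) =
      ∑ k ∈ Finset.range (n + t + 2), ck t k * (n.choose k : ℚ) from
    (Finset.sum_subset (Finset.range_subset_range.2 (by omega)) (by
      intro k _ hk
      simp only [Finset.mem_range, not_lt] at hk
      rw [Nat.choose_eq_zero_of_lt (by omega)]
      simp))]
  rw [show (∑ k ∈ Finset.range (t + 1), ck t k * (n.choose k : ℚ)) =
      ∑ k ∈ Finset.range (n + t + 2), ck t k * (n.choose k : ℚ) from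
    (Finset.sum_subset (Finset.range_subset_range.2 (by omega)) (by
      intro k _ hk
      simp only [Finset.mem_range, not_lt] at hk
      rw [ck_eq_zero (by omega)]
      simp))]

/-- For every `t ≥ 0` there is a polynomial `P_t ∈ ℚ[x]` of degree `t` such that
`[z^{2t}] S(z)^{ν-1} = P_t(ν)` for all positive integers `ν`. -/
theorem coeff_S_pow_polynomial (t : ℕ) :
    ∃ P : Polynomial ℚ, P.degree = t ∧
      ∀ ν : ℕ, 0 < ν →
        PowerSeries.coeff (2 * t) (Spow ^ (ν - 1)) = P.eval (ν : ℚ) := by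
  classical
  set P0 : Polynomial ℚ :=
    ∑ k ∈ Finset.range (t + 1), Polynomial.C (ck t k / k !) * descPochhammer ℚ k with hP0
  have hdescnd : ∀ k, (descPochhammer ℚ k).natDegree = k := fun k =>
    descPochhammer_natDegree ℚ k
  have hcoeffP0 : P0.coeff t = ck t t / t ! := by
    rw [hP0, Polynomial.finset_sum_coeff]
    rw [Finset.sum_eq_single t]
    · have h2 := (monic_descPochhammer ℚ t).coeff_natDegree
      rw [hdescnd] at h2
      rw [Polynomial.coeff_C_mul, h2, mul_one]
    · intro k hk hkt
      simp only [Finset.mem_range] at hk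
      rw [Polynomial.coeff_C_mul,
        Polynomial.coeff_eq_zero_of_natDegree_lt (by rw [hdescnd]; omega), mul_zero]
    · intro h; exact absurd (Finset.self_mem_range_succ t) h
  have hct : ck t t ≠ 0 := by rw [ck_top]; positivity
  have hcoeff_ne : P0.coeff t ≠ 0 := by
    rw [hcoeffP0]
    exact div_ne_zero hct (by positivity)
  have hdegle : P0.natDegree ≤ t := by
    refine Polynomial.natDegree_sum_le_of_forall_le _ _ (fun k hk => ?_)
    simp only [Finset.mem_range] at hk
    calc (Polynomial.C (ck t k / k !) * descPochhammer ℚ k).natDegree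
        ≤ (descPochhammer ℚ k).natDegree := Polynomial.natDegree_C_mul_le _ _
      _ ≤ t := by rw [hdescnd]; omega
  have hdegP0 : P0.degree = t :=
    Polynomial.degree_eq_of_le_of_coeff_ne_zero
      (le_trans Polynomial.degree_le_natDegree (by exact_mod_cast Nat.cast_le.2 hdegle))
      hcoeff_ne
  have hndP0 : P0.natDegree = t := Polynomial.natDegree_eq_of_degree_eq_some hdegP0
  set P : Polynomial ℚ := P0.comp (Polynomial.X - Polynomial.C 1) with hP
  have hndq : (Polynomial.X - Polynomial.C (1:ℚ)).natDegree = 1 := by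
    simpa using Polynomial.natDegree_X_sub_C (1:ℚ)
  have hndP : P.natDegree = t := by
    rw [hP, Polynomial.natDegree_comp, hndq, mul_one, hndP0]
  have hPne : P ≠ 0 := by
    intro h
    have hlc : P.leadingCoeff ≠ 0 := by
      rw [hP, Polynomial.leadingCoeff_comp (by rw [hndq]; omega)]
      apply mul_ne_zero
      · rw [Polynomial.leadingCoeff, hndP0]; exact hcoeff_ne
      · rw [(Polynomial.monic_X_sub_C (1:ℚ)).leadingCoeff]
        simp
    exact hlc (by rw [h, Polynomial.leadingCoeff_zero])
  refine ⟨P, ?_, ?_⟩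
  · rw [Polynomial.degree_eq_natDegree hPne, hndP]
  · intro ν hν
    rw [coeff_Spow_pow t (ν - 1)]
    rw [hP, Polynomial.eval_comp]
    have : Polynomial.eval (ν : ℚ) (Polynomial.X - Polynomial.C 1) = ((ν - 1 : ℕ) : ℚ) := by
      simp
      rw [Nat.cast_sub hν]
      simp
    rw [this, hP0, Polynomial.eval_finset_sum]
    refine Finset.sum_congr rfl (fun k hk => ?_)
    rw [Polynomial.eval_mul, Polynomial.eval_C,
      descPochhammer_eval_eq_descFactorial ℚ (ν - 1) k,
      Nat.descFactorial_eq_factorial_mul_choose]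
    push_cast
    field_simp
end

section
/- For every non-negative integer t there exists a polynomial Q_t ∈ ℚ[x] of degree t such that for all positive integers ν, the coefficient of z^{2t} in S(z)^{-ν-1} equals Q_t(ν). -/
open Nat

/-- For every `t ≥ 0` there is a polynomial `Q_t ∈ ℚ[x]` of degree `t` such that
`[z^{2t}] S(z)^{-ν-1} = Q_t(ν)` for all positive integers `ν`. -/
theorem coeff_S_neg_pow_polynomial (t : ℕ) :
    ∃ Q : Polynomial ℚ, Q.degree = t ∧
      ∀ ν : ℕ, 0 < ν →
        PowerSeries.coeff (2 * t) (Spow⁻¹ ^ (ν + 1)) = Q.eval (ν : ℚ) := by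
  have hc0 : PowerSeries.constantCoeff Spow = 1 := by
    simp [Spow, ← PowerSeries.coeff_zero_eq_constantCoeff_apply]
  have hc0' : PowerSeries.constantCoeff Spow ≠ 0 := by rw [hc0]; norm_num
  have hmul : Spow * Spow⁻¹ = 1 := PowerSeries.mul_inv_cancel _ hc0'
  set f : PowerSeries ℚ := Spow⁻¹ with hf
  have hf0' : PowerSeries.constantCoeff f = 1 := by
    rw [hf, PowerSeries.constantCoeff_inv, hc0]; norm_num
  have hf0 : PowerSeries.coeff 0 f = 1 := by
    rw [PowerSeries.coeff_zero_eq_constantCoeff_apply, hf0']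
  have hS1 : PowerSeries.coeff 1 Spow = 0 := by simp [Spow]
  have hS2 : PowerSeries.coeff 2 Spow = 1 / 24 := by
    simp [Spow]
    norm_num [Nat.factorial]
  have hf1 : PowerSeries.coeff 1 f = 0 := by
    have := congrArg (PowerSeries.coeff 1) hmul
    rw [PowerSeries.coeff_mul, Finset.Nat.sum_antidiagonal_eq_sum_range_succ_mk] at this
    simp [Finset.sum_range_succ, hS1, hc0,
      PowerSeries.coeff_zero_eq_constantCoeff_apply] at this
    simpa using this
  have hf2 : PowerSeries.coeff 2 f = -(1 / 24) := by
    have := congrArg (PowerSeries.coeff 2) hmul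
    rw [PowerSeries.coeff_mul, Finset.Nat.sum_antidiagonal_eq_sum_range_succ_mk] at this
    simp [Finset.sum_range_succ, hS1, hS2, hf0, hc0,
      PowerSeries.coeff_zero_eq_constantCoeff_apply] at this
    linarith [this]
  set T : PowerSeries ℚ := f - 1 with hT
  have hfT : f = 1 + T := by ring
  have hT0 : PowerSeries.coeff 0 T = 0 := by
    rw [hT, map_sub, hf0]; simp
  have hT1 : PowerSeries.coeff 1 T = 0 := by
    rw [hT, map_sub, hf1]; simp
  have hT2 : PowerSeries.coeff 2 T = -(1 / 24) := by
    rw [hT, map_sub, hf2]; simp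
  have hdvd : (PowerSeries.X : PowerSeries ℚ) ^ 2 ∣ T := by
    rw [PowerSeries.X_pow_dvd_iff]
    intro m hm
    interval_cases m
    · exact hT0
    · exact hT1
  obtain ⟨U, hU⟩ := hdvd
  have hU0 : PowerSeries.constantCoeff U = -(1 / 24) := by
    have := hT2
    rw [hU] at this
    rw [show (2 : ℕ) = 0 + 2 from rfl, PowerSeries.coeff_X_pow_mul] at this
    rw [← PowerSeries.coeff_zero_eq_constantCoeff_apply, this]
  -- the coefficients a k = [z^{2t}] T^k
  set a : ℕ → ℚ := fun k => PowerSeries.coeff (2 * t) (T ^ k) with ha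
  have hak : ∀ k, a k = PowerSeries.coeff (2 * t) (T ^ k) := fun k => rfl
  have hTk : ∀ k, T ^ k = PowerSeries.X ^ (2 * k) * U ^ k := by
    intro k
    rw [hU, mul_pow, ← pow_mul]
  have ha_zero : ∀ k, t < k → a k = 0 := by
    intro k hk
    rw [hak, hTk k, PowerSeries.coeff_X_pow_mul', if_neg (by omega)]
  have ha_t : a t = (-(1 / 24)) ^ t := by
    rw [hak, hTk t, PowerSeries.coeff_X_pow_mul', if_pos le_rfl]
    simp only [Nat.sub_self, PowerSeries.coeff_zero_eq_constantCoeff_apply, map_pow, hU0]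
  have ha_t_ne : a t ≠ 0 := by rw [ha_t]; positivity
  -- the candidate polynomial
  set B : ℕ → Polynomial ℚ :=
    fun k => (descPochhammer ℚ k).comp (Polynomial.X + 1) with hB
  have hBk : ∀ k, B k = (descPochhammer ℚ k).comp (Polynomial.X + 1) := fun k => rfl
  have hBmonic : ∀ k, (B k).Monic := fun k => by
    have := (monic_descPochhammer ℚ k).comp_X_add_C 1
    rw [hBk]
    simpa using this
  have hBdeg : ∀ k, (B k).natDegree = k := fun k => by
    rw [hBk, Polynomial.natDegree_comp, descPochhammer_natDegree,
      show (Polynomial.X + 1 : Polynomial ℚ) = Polynomial.X + Polynomial.C 1 from by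
        rw [map_one],
      Polynomial.natDegree_X_add_C, mul_one]
  set Q : Polynomial ℚ :=
    ∑ k ∈ Finset.range (t + 1), Polynomial.C (a k / k !) * B k with hQ
  have hdegle : Q.degree ≤ t := by
    rw [hQ]
    refine (Polynomial.degree_sum_le _ _).trans ?_
    apply Finset.sup_le
    intro k hk
    refine (Polynomial.degree_mul_le _ _).trans ?_
    have hBd : (B k).degree ≤ (k : WithBot ℕ) := by
      have h := Polynomial.degree_le_natDegree (p := B k)
      rwa [hBdeg k] at h
    calc (Polynomial.C (a k / k !)).degree + (B k).degree
        ≤ 0 + (k : WithBot ℕ) := add_le_add Polynomial.degree_C_le hBd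
      _ ≤ (t : WithBot ℕ) := by
          rw [zero_add]
          exact_mod_cast Nat.lt_succ_iff.mp (Finset.mem_range.mp hk)
  have hcoefft : Q.coeff t = a t / t ! := by
    rw [hQ, Polynomial.finset_sum_coeff]
    rw [Finset.sum_eq_single t]
    · rw [Polynomial.coeff_C_mul]
      have : (B t).coeff t = 1 := by
        have := (hBmonic t).leadingCoeff
        rwa [Polynomial.leadingCoeff, hBdeg t] at this
      rw [this, mul_one]
    · intro k hk hkt
      have hklt : k < t := lt_of_le_of_ne (Nat.lt_succ_iff.mp (Finset.mem_range.mp hk)) hkt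
      rw [Polynomial.coeff_C_mul,
        Polynomial.coeff_eq_zero_of_natDegree_lt (by rw [hBdeg]; exact hklt), mul_zero]
    · intro h
      exact absurd (Finset.self_mem_range_succ t) h
  have hQdeg : Q.degree = t :=
    Polynomial.degree_eq_of_le_of_coeff_ne_zero hdegle (by
      rw [hcoefft]
      exact div_ne_zero ha_t_ne (by exact_mod_cast (Nat.factorial_ne_zero t)))
  refine ⟨Q, hQdeg, ?_⟩
  intro ν hν
  -- key coefficient identity
  have hbinom : PowerSeries.coeff (2 * t) (f ^ (ν + 1)) =
      ∑ k ∈ Finset.range (ν + 2), a k * (ν + 1).choose k := by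
    rw [hfT, add_comm (1 : PowerSeries ℚ) T, add_pow]
    rw [map_sum]
    apply Finset.sum_congr rfl
    intro k _
    rw [one_pow, mul_one, hak,
      show (((ν + 1).choose k : ℕ) : PowerSeries ℚ)
          = PowerSeries.C (((ν + 1).choose k : ℕ) : ℚ) from (map_natCast _ _).symm,
      PowerSeries.coeff_mul_C]
  have hsum : ∑ k ∈ Finset.range (ν + 2), a k * (ν + 1).choose k =
      ∑ k ∈ Finset.range (t + 1), a k * (ν + 1).choose k := by
    rcases le_total (ν + 2) (t + 1) with h | h
    · refine Finset.sum_subset (Finset.range_subset_range.mpr h) ?_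
      intro k hk hk'
      have hlt : ν + 1 < k := by
        simp only [Finset.mem_range, not_lt] at hk'
        omega
      rw [Nat.choose_eq_zero_of_lt hlt]
      simp
    · refine (Finset.sum_subset (Finset.range_subset_range.mpr h) ?_).symm
      intro k hk hk'
      have hlt : t < k := by
        simp only [Finset.mem_range, not_lt] at hk'
        omega
      rw [ha_zero k hlt, zero_mul]
  have hevalQ : Q.eval (ν : ℚ) = ∑ k ∈ Finset.range (t + 1), a k * (ν + 1).choose k := by
    rw [hQ, Polynomial.eval_finset_sum]
    apply Finset.sum_congr rfl
    intro k _
    rw [Polynomial.eval_mul, Polynomial.eval_C, hBk, Polynomial.eval_comp]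
    have hx : (Polynomial.X + 1 : Polynomial ℚ).eval (ν : ℚ) = ((ν + 1 : ℕ) : ℚ) := by
      push_cast; simp
    rw [hx, descPochhammer_eval_eq_descFactorial,
      Nat.descFactorial_eq_factorial_mul_choose]
    push_cast
    field_simp
  rw [hbinom, hsum, hevalQ]
end
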